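/- For every real δ ≥ 2 and every x ∈ (0, 1/2], the quantity I_δ(x) satisfies I_δ(x) ≤ (1−x) − (1−x)^{2(1−1/δ)}. -/

import Mathlib

/-- `Idelta δ x` : for real `δ > 1` and `x ∈ (0, 1/2]`,
`I_δ(x) = inf{ y : 0 < y ≤ x and
  1 < x^{x(1−1/δ)}·(1−x)^{(1−x)(1−1/δ)}·(1−x−y)^{−(1−x−y)/2}·(x−y)^{−(x−y)/2}·y^{−y} }`. -/
noncomputable def Idelta (δ x : ℝ) : ℝ :=
  sInf {y : ℝ | 0 < y ∧ y ≤ x ∧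
    1 < x ^ (x * (1 - 1/δ)) * (1 - x) ^ ((1 - x) * (1 - 1/δ)) *
        (1 - x - y) ^ (-(1 - x - y)/2) * (x - y) ^ (-(x - y)/2) * y ^ (-y)}

open Real Set

lemma gpos (x : ℝ) (hx0 : 0 < x) (hx : x ≤ 1/2) (y : ℝ)
    (hy0 : 0 < y) (hy1 : y < (1-x)*x) :
    0 < (x * Real.log x / (2 * Real.log (1-x))) * Real.log (1-x-y)
        + y/2 * Real.log (1-x-y) - y * Real.log y - (x-y)/2 * Real.log (x-y) := by
  have hx1 : x < 1 := by linarith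
  set u : ℝ := 1 - x with hu
  have hu0 : 0 < u := by rw [hu]; linarith
  have hu1 : u < 1 := by rw [hu]; linarith
  have hlx : Real.log x < 0 := Real.log_neg hx0 hx1
  have hlu : Real.log u < 0 := Real.log_neg hu0 hu1
  have hlu' : Real.log u ≠ 0 := ne_of_lt hlu
  set c : ℝ := x * Real.log x / (2 * Real.log u) with hcdef
  have hc : 0 < c := div_pos_of_neg_of_neg (by nlinarith) (by linarith)
  set g : ℝ → ℝ := fun y => c * Real.log (u - y) + y/2 * Real.log (u - y)
      - y * Real.log y - (x - y)/2 * Real.log (x - y) with hg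
  have hux : 0 < u * x := mul_pos hu0 hx0
  have hsub : ∀ z ∈ Icc (0:ℝ) (u*x), 0 < u - z ∧ 0 < x - z := by
    intro z hz
    constructor
    · nlinarith [hz.2, hz.1]
    · nlinarith [hz.2, hz.1]
  -- continuity
  have hcont : ContinuousOn g (Icc 0 (u*x)) := by
    rw [hg]
    apply ContinuousOn.sub
    apply ContinuousOn.sub
    apply ContinuousOn.add
    · exact continuousOn_const.mul ((continuousOn_const.sub continuousOn_id).log
        (fun z hz => (hsub z hz).1.ne'))
    · exact (continuousOn_id.div_const 2).mul ((continuousOn_const.sub continuousOn_id).log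
        (fun z hz => (hsub z hz).1.ne'))
    · exact Real.continuous_mul_log.continuousOn
    · exact ((continuousOn_const.sub continuousOn_id).div_const 2).mul
        ((continuousOn_const.sub continuousOn_id).log (fun z hz => (hsub z hz).2.ne'))
  -- first derivative
  set g1 : ℝ → ℝ := fun y => -c/(u-y) + (1/2) * Real.log (u-y) - y/(2*(u-y))
      - Real.log y - 1 + (1/2) * Real.log (x-y) + 1/2 with hg1
  have hd1 : ∀ z ∈ Ioo (0:ℝ) (u*x), HasDerivAt g (g1 z) z := by
    intro z hz
    have hz0 : 0 < z := hz.1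
    have huz : 0 < u - z := (hsub z ⟨hz0.le, hz.2.le⟩).1
    have hxz : 0 < x - z := (hsub z ⟨hz0.le, hz.2.le⟩).2
    have huz' : u - z ≠ 0 := huz.ne'
    have hxz' : x - z ≠ 0 := hxz.ne'
    have hz0' : z ≠ 0 := hz0.ne'
    have hL : HasDerivAt (fun w : ℝ => u - w) (-1) z := by
      simpa using (hasDerivAt_id z).const_sub u
    have hLx : HasDerivAt (fun w : ℝ => x - w) (-1) z := by
      simpa using (hasDerivAt_id z).const_sub x
    have hlog1 : HasDerivAt (fun w : ℝ => Real.log (u - w)) ((u-z)⁻¹ * (-1)) z :=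
      (Real.hasDerivAt_log huz').comp z hL
    have hlog2 : HasDerivAt (fun w : ℝ => Real.log (x - w)) ((x-z)⁻¹ * (-1)) z :=
      (Real.hasDerivAt_log hxz').comp z hLx
    have h1 : HasDerivAt (fun w : ℝ => c * Real.log (u - w)) (c * ((u-z)⁻¹ * (-1))) z :=
      hlog1.const_mul c
    have h2 : HasDerivAt (fun w : ℝ => w/2 * Real.log (u - w))
        (1/2 * Real.log (u-z) + z/2 * ((u-z)⁻¹ * (-1))) z :=
      ((hasDerivAt_id z).div_const 2).mul hlog1
    have h3 : HasDerivAt (fun w : ℝ => w * Real.log w)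
        (1 * Real.log z + z * z⁻¹) z :=
      (hasDerivAt_id z).mul (Real.hasDerivAt_log hz0')
    have h4 : HasDerivAt (fun w : ℝ => (x - w)/2 * Real.log (x - w))
        ((-1)/2 * Real.log (x-z) + (x-z)/2 * ((x-z)⁻¹ * (-1))) z :=
      (hLx.div_const 2).mul hlog2
    have hcomb := ((h1.add h2).sub h3).sub h4
    have hval : c * ((u-z)⁻¹ * (-1)) + (1/2 * Real.log (u-z) + z/2 * ((u-z)⁻¹ * (-1)))
        - (1 * Real.log z + z * z⁻¹)
        - ((-1)/2 * Real.log (x-z) + (x-z)/2 * ((x-z)⁻¹ * (-1))) = g1 z := by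
      rw [hg1]
      field_simp
      ring
    exact hval ▸ hcomb
  -- second derivative
  set g2 : ℝ → ℝ := fun y => -c/(u-y)^2 - 1/(2*(u-y)) - u/(2*(u-y)^2) - 1/y - 1/(2*(x-y))
    with hg2
  have hd2 : ∀ z ∈ Ioo (0:ℝ) (u*x), HasDerivAt g1 (g2 z) z := by
    intro z hz
    have hz0 : 0 < z := hz.1
    have huz : 0 < u - z := (hsub z ⟨hz0.le, hz.2.le⟩).1
    have hxz : 0 < x - z := (hsub z ⟨hz0.le, hz.2.le⟩).2
    have huz' : u - z ≠ 0 := huz.ne'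
    have hxz' : x - z ≠ 0 := hxz.ne'
    have hz0' : z ≠ 0 := hz0.ne'
    have hL : HasDerivAt (fun w : ℝ => u - w) (-1) z := by
      simpa using (hasDerivAt_id z).const_sub u
    have hLx : HasDerivAt (fun w : ℝ => x - w) (-1) z := by
      simpa using (hasDerivAt_id z).const_sub x
    have hlog1 : HasDerivAt (fun w : ℝ => Real.log (u - w)) ((u-z)⁻¹ * (-1)) z :=
      (Real.hasDerivAt_log huz').comp z hL
    have hlog2 : HasDerivAt (fun w : ℝ => Real.log (x - w)) ((x-z)⁻¹ * (-1)) z :=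
      (Real.hasDerivAt_log hxz').comp z hLx
    have h1 : HasDerivAt (fun w : ℝ => -c/(u-w))
        ((0 * (u-z) - (-c) * (-1))/(u-z)^2) z :=
      (hasDerivAt_const z (-c)).div hL huz'
    have h2 : HasDerivAt (fun w : ℝ => 1/2 * Real.log (u - w))
        (1/2 * ((u-z)⁻¹ * (-1))) z := hlog1.const_mul (1/2)
    have hden : HasDerivAt (fun w : ℝ => 2*(u-w)) (2 * (-1)) z := hL.const_mul 2
    have h3 : HasDerivAt (fun w : ℝ => w/(2*(u-w)))
        ((1 * (2*(u-z)) - z * (2 * (-1)))/(2*(u-z))^2) z :=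
      (hasDerivAt_id z).div hden (by positivity)
    have h4 : HasDerivAt (fun w : ℝ => Real.log w) z⁻¹ z := Real.hasDerivAt_log hz0'
    have h5 : HasDerivAt (fun w : ℝ => 1/2 * Real.log (x - w))
        (1/2 * ((x-z)⁻¹ * (-1))) z := hlog2.const_mul (1/2)
    have hcomb := (((((h1.add h2).sub h3).sub h4).sub (hasDerivAt_const z (1:ℝ))).add h5).add
        (hasDerivAt_const z (1/2 : ℝ))
    have hval : (0 * (u-z) - (-c) * (-1))/(u-z)^2 + 1/2 * ((u-z)⁻¹ * (-1))
        - (1 * (2*(u-z)) - z * (2 * (-1)))/(2*(u-z))^2 - z⁻¹ - 0 + 1/2 * ((x-z)⁻¹ * (-1)) + 0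
        = g2 z := by
      rw [hg2]
      field_simp
      ring
    exact hval ▸ hcomb
  -- strict concavity
  have hconc : StrictConcaveOn ℝ (Icc 0 (u*x)) g := by
    apply strictConcaveOn_of_deriv2_neg (convex_Icc _ _) hcont
    intro z hz
    rw [interior_Icc] at hz
    have hev : deriv g =ᶠ[nhds z] g1 := by
      filter_upwards [isOpen_Ioo.mem_nhds hz] with w hw
      exact (hd1 w hw).deriv
    have hdd : deriv (deriv g) z = g2 z := by
      rw [Filter.EventuallyEq.deriv_eq hev]
      exact (hd2 z hz).deriv
    show deriv (deriv g) z < 0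
    rw [hdd]
    have hz0 : 0 < z := hz.1
    have huz : 0 < u - z := (hsub z ⟨hz0.le, hz.2.le⟩).1
    have hxz : 0 < x - z := (hsub z ⟨hz0.le, hz.2.le⟩).2
    simp only [hg2]
    have e1 : 0 < c/(u-z)^2 := by positivity
    have e2 : 0 < 1/(2*(u-z)) := by positivity
    have e3 : 0 < u/(2*(u-z)^2) := by positivity
    have e4 : 0 < 1/z := by positivity
    have e5 : 0 < 1/(2*(x-z)) := by positivity
    have : -c/(u-z)^2 = -(c/(u-z)^2) := by ring
    rw [this]
    linarith
  -- endpoint values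
  have hg0 : g 0 = 0 := by
    rw [hg]
    simp only [sub_zero, zero_mul, zero_div, mul_zero]
    rw [hcdef]
    field_simp
    ring
  have hgux : g (u*x) = 0 := by
    rw [hg]
    have e1 : u - u*x = u*u := by rw [hu]; ring
    have e2 : x - u*x = x*x := by rw [hu]; ring
    simp only [e1, e2]
    rw [Real.log_mul hu0.ne' hu0.ne', Real.log_mul hx0.ne' hx0.ne',
        Real.log_mul hu0.ne' hx0.ne', hcdef]
    field_simp
    ring
  -- conclude
  have ha : 0 < 1 - y/(u*x) := by
    have : y/(u*x) < 1 := (div_lt_one hux).mpr hy1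
    linarith
  have hb : 0 < y/(u*x) := div_pos hy0 hux
  have hab : (1 - y/(u*x)) + y/(u*x) = 1 := by ring
  have h0mem : (0:ℝ) ∈ Icc (0:ℝ) (u*x) := left_mem_Icc.mpr hux.le
  have h1mem : u*x ∈ Icc (0:ℝ) (u*x) := right_mem_Icc.mpr hux.le
  have hcc := hconc.2 h0mem h1mem (ne_of_lt hux) ha hb hab
  rw [smul_eq_mul, smul_eq_mul, smul_eq_mul, smul_eq_mul, hg0, hgux] at hcc
  have harg : (1 - y/(u*x)) * 0 + (y/(u*x)) * (u*x) = y := by field_simp; ring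
  rw [harg] at hcc
  simp only [mul_zero, add_zero, zero_add] at hcc
  have : 0 < g y := hcc
  rw [hg] at this
  simpa using this

/-- For every real `δ ≥ 2` and every `x ∈ (0, 1/2]`,
`I_δ(x) ≤ (1−x) − (1−x)^{2(1−1/δ)}`. -/
theorem stmt0 (δ x : ℝ) (hδ : 2 ≤ δ) (hx0 : 0 < x) (hx : x ≤ 1/2) :
    Idelta δ x ≤ (1 - x) - (1 - x) ^ (2 * (1 - 1/δ)) := by
  have hx1 : x < 1 := by linarith
  have hδ0 : 0 < δ := by linarith
  have hu0 : 0 < 1 - x := by linarith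
  have hu1 : 1 - x < 1 := by linarith
  have hux : 0 < (1-x)*x := mul_pos hu0 hx0
  have hβ1 : 1 - 1/δ < 1 := by
    have : 0 < 1/δ := by positivity
    linarith
  have hβh : 1/2 ≤ 1 - 1/δ := by
    have : 1/δ ≤ 1/2 := by
      rw [div_le_div_iff₀ hδ0 (by norm_num)]
      linarith
    linarith
  unfold Idelta
  have hbdd : BddBelow {y : ℝ | 0 < y ∧ y ≤ x ∧
      1 < x ^ (x * (1 - 1/δ)) * (1 - x) ^ ((1 - x) * (1 - 1/δ)) *
        (1 - x - y) ^ (-(1 - x - y)/2) * (x - y) ^ (-(x - y)/2) * y ^ (-y)} :=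
    ⟨0, fun z hz => le_of_lt hz.1⟩
  have hmem : ∀ y : ℝ, 0 < y → y < (1-x)*x → 1 - x - y ≤ (1-x)^(2*(1-1/δ)) →
      y ∈ {y : ℝ | 0 < y ∧ y ≤ x ∧
      1 < x ^ (x * (1 - 1/δ)) * (1 - x) ^ ((1 - x) * (1 - 1/δ)) *
        (1 - x - y) ^ (-(1 - x - y)/2) * (x - y) ^ (-(x - y)/2) * y ^ (-y)} := by
    intro y hy0 hy1 hyc
    have huy : 0 < 1 - x - y := by nlinarith
    have hxy : 0 < x - y := by nlinarith
    refine ⟨hy0, by nlinarith, ?_⟩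
    rw [Real.rpow_def_of_pos hx0, Real.rpow_def_of_pos hu0, Real.rpow_def_of_pos huy,
        Real.rpow_def_of_pos hxy, Real.rpow_def_of_pos hy0, ← Real.exp_add, ← Real.exp_add,
        ← Real.exp_add, ← Real.exp_add, Real.one_lt_exp_iff]
    have hkey := gpos x hx0 hx y hy0 hy1
    have hlu : Real.log (1-x) < 0 := Real.log_neg hu0 hu1
    have hlx : Real.log x < 0 := Real.log_neg hx0 hx1
    have hslack : Real.log (1-x-y) ≤ 2*(1-1/δ) * Real.log (1-x) := by
      rw [← Real.log_rpow hu0]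
      exact (Real.log_le_log_iff huy (Real.rpow_pos_of_pos hu0 _)).mpr hyc
    have hlu' : Real.log (1-x) ≠ 0 := ne_of_lt hlu
    have hident : Real.log x * (x*(1-1/δ)) + Real.log (1-x) * ((1-x)*(1-1/δ))
        + Real.log (1-x-y) * (-(1-x-y)/2) + Real.log (x-y) * (-(x-y)/2) + Real.log y * (-y)
        = (x * Real.log x / (2*Real.log (1-x)) * Real.log (1-x-y)
            + y/2 * Real.log (1-x-y) - y * Real.log y - (x-y)/2 * Real.log (x-y))
          + (x * Real.log x/(2*Real.log (1-x)) + (1-x)/2)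
            * (2*(1-1/δ)*Real.log (1-x) - Real.log (1-x-y)) := by
      field_simp
      ring
    rw [hident]
    have hc : 0 < x * Real.log x/(2*Real.log (1-x)) :=
      div_pos_of_neg_of_neg (by nlinarith) (by linarith)
    have hT : 0 ≤ (x * Real.log x/(2*Real.log (1-x)) + (1-x)/2)
        * (2*(1-1/δ)*Real.log (1-x) - Real.log (1-x-y)) :=
      mul_nonneg (by linarith) (by linarith)
    linarith
  rcases eq_or_lt_of_le hδ with heq | hlt
  · -- δ = 2
    subst heq
    have hexp : 2*(1 - 1/(2:ℝ)) = 1 := by norm_num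
    have hrw : (1 - x) ^ (2*(1 - 1/(2:ℝ))) = 1 - x := by rw [hexp, Real.rpow_one]
    rw [hrw]
    have h0 : (1:ℝ) - x - (1 - x) = 0 := by ring
    rw [h0]
    apply le_of_forall_pos_le_add
    intro ε hε
    set m := min ε ((1-x)*x/2) with hm
    have hm0 : 0 < m := lt_min hε (by positivity)
    have hm1 : m < (1-x)*x := lt_of_le_of_lt (min_le_right _ _) (by linarith)
    have hmc : 1 - x - m ≤ (1-x)^(2*(1-1/(2:ℝ))) := by
      rw [hrw]
      linarith
    have := csInf_le hbdd (hmem m hm0 hm1 hmc)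
    have hme : m ≤ ε := min_le_left _ _
    linarith
  · -- 2 < δ
    have h2β1 : 1 < 2*(1-1/δ) := by
      have : 1/δ < 1/2 := by
        rw [div_lt_div_iff₀ hδ0 (by norm_num)]
        linarith
      linarith
    have h2β2 : 2*(1-1/δ) < 2 := by linarith
    have hpow1 : (1-x)^(2*(1-1/δ)) < 1 - x := by
      have := Real.rpow_lt_rpow_of_exponent_gt hu0 hu1 h2β1
      rwa [Real.rpow_one] at this
    have hpow2 : (1-x)*(1-x) < (1-x)^(2*(1-1/δ)) := by
      have h := Real.rpow_lt_rpow_of_exponent_gt hu0 hu1 h2β2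
      have e : (1-x)^(2:ℝ) = (1-x)*(1-x) := by
        rw [show (2:ℝ) = ((2:ℕ):ℝ) from by norm_num, Real.rpow_natCast]
        ring
      rwa [e] at h
    have hy0pos : 0 < (1-x) - (1-x)^(2*(1-1/δ)) := by linarith
    have hy0lt : (1-x) - (1-x)^(2*(1-1/δ)) < (1-x)*x := by nlinarith
    have hcond : 1 - x - ((1-x) - (1-x)^(2*(1-1/δ))) ≤ (1-x)^(2*(1-1/δ)) := by
      have : 1 - x - ((1-x) - (1-x)^(2*(1-1/δ))) = (1-x)^(2*(1-1/δ)) := by ring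
      linarith [this.le]
    exact csInf_le hbdd (hmem _ hy0pos hy0lt hcond)
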